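/- arXiv:2004.08001 — 2 statements merged into one kernel-verified Lean document; each statement's English description precedes it below -/
import Mathlib

section
/- Let q be a prime power, let n be a positive integer, let m be a divisor of n, and let β ∈ F_{q^n} be a normal element over F_q. Then every element of F_{q^m} is written uniquely as L_{((x^n−1)/(x^m−1))·h(x)}(β) for some polynomial h ∈ F_q[x] that is either constant or has degree at most m − 1. -/
open Polynomial

/-- The `q`-associate of a polynomial `f = ∑ aᵢ xⁱ` over the finite field `F` (with
`q = Fintype.card F` elements), evaluated at `α` in the algebraic closure:
`L_f(α) = ∑ aᵢ α^(qⁱ)`. -/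
noncomputable def qAssoc (F : Type*) [Field F] [Fintype F] (f : Polynomial F)
    (α : AlgebraicClosure F) : AlgebraicClosure F :=
  ∑ i ∈ f.support, algebraMap F (AlgebraicClosure F) (f.coeff i) * α ^ (Fintype.card F) ^ i

/-- `β ∈ F_{q^n}` is a normal element over `F_q` if `β, β^q, …, β^{q^{n-1}}` form an `F_q`-basis
of `F_{q^n}` (the subfield `{x | x^{q^n} = x}` of the algebraic closure). -/
def IsNormalElement (F : Type*) [Field F] [Fintype F] (n : ℕ) (β : AlgebraicClosure F) : Prop :=
  LinearIndependent F (fun i : Fin n => β ^ (Fintype.card F) ^ (i : ℕ)) ∧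
    (Submodule.span F (Set.range fun i : Fin n => β ^ (Fintype.card F) ^ (i : ℕ)) :
        Set (AlgebraicClosure F)) =
      {x : AlgebraicClosure F | x ^ (Fintype.card F) ^ n = x}

open Finset

section Aux

variable {F : Type*} [Field F] [Fintype F]

lemma qAssoc_eq_sum_range (f : F[X]) {N : ℕ} (h : f.natDegree < N) (β : AlgebraicClosure F) :
    qAssoc F f β = ∑ i ∈ range N,
      algebraMap F (AlgebraicClosure F) (f.coeff i) * β ^ (Fintype.card F) ^ i := by
  refine Finset.sum_subset (supp_subset_range h) fun i _ hi => ?_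
  rw [Polynomial.notMem_support_iff.mp hi, map_zero, zero_mul]

lemma qAssoc_add (f g : F[X]) (β : AlgebraicClosure F) :
    qAssoc F (f + g) β = qAssoc F f β + qAssoc F g β := by
  set N := max f.natDegree g.natDegree + 1 with hN
  have hf : f.natDegree < N := lt_of_le_of_lt (le_max_left _ _) (Nat.lt_succ_self _)
  have hg : g.natDegree < N := lt_of_le_of_lt (le_max_right _ _) (Nat.lt_succ_self _)
  have hfg : (f + g).natDegree < N :=
    lt_of_le_of_lt (natDegree_add_le f g) (Nat.lt_succ_self _)
  rw [qAssoc_eq_sum_range f hf β, qAssoc_eq_sum_range g hg β, qAssoc_eq_sum_range _ hfg β,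
    ← Finset.sum_add_distrib]
  exact Finset.sum_congr rfl fun i _ => by rw [coeff_add, map_add, add_mul]

lemma qAssoc_zero (β : AlgebraicClosure F) : qAssoc F 0 β = 0 := by
  simp [qAssoc]

lemma qAssoc_finset_sum {ι : Type*} (s : Finset ι) (f : ι → F[X]) (β : AlgebraicClosure F) :
    qAssoc F (∑ j ∈ s, f j) β = ∑ j ∈ s, qAssoc F (f j) β := by
  classical
  induction s using Finset.induction with
  | empty => simp [qAssoc_zero]
  | insert _ _ hnot ih => rw [Finset.sum_insert hnot, Finset.sum_insert hnot, qAssoc_add, ih]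

lemma qAssoc_X_pow_mul (k : ℕ) (h : F[X]) {N : ℕ} (hN : h.natDegree < N)
    (β : AlgebraicClosure F) :
    qAssoc F (X ^ k * h) β = ∑ i ∈ range N,
      algebraMap F (AlgebraicClosure F) (h.coeff i) * β ^ (Fintype.card F) ^ (k + i) := by
  have hd : (X ^ k * h).natDegree < k + N := by
    have := natDegree_mul_le (p := (X : F[X]) ^ k) (q := h)
    rw [natDegree_X_pow] at this
    omega
  rw [qAssoc_eq_sum_range _ hd, Finset.sum_range_add]
  have h1 : ∑ i ∈ range k,
      algebraMap F (AlgebraicClosure F) ((X ^ k * h).coeff i) * β ^ (Fintype.card F) ^ i = 0 := by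
    refine Finset.sum_eq_zero fun i hi => ?_
    rw [mul_comm ((X : F[X]) ^ k) h, coeff_mul_X_pow', if_neg (Nat.not_le.mpr (mem_range.mp hi))]
    rw [map_zero, zero_mul]
  rw [h1, zero_add]
  refine Finset.sum_congr rfl fun i _ => ?_
  rw [mul_comm ((X : F[X]) ^ k) h, coeff_mul_X_pow', if_pos (Nat.le_add_right _ _),
    Nat.add_sub_cancel_left]

lemma sum_grid {M : Type*} [AddCommMonoid M] (A : ℕ → M) (t m : ℕ) :
    ∑ j ∈ range t, ∑ i ∈ range m, A (j * m + i) = ∑ k ∈ range (t * m), A k := by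
  induction t with
  | zero => simp
  | succ t ih => rw [Finset.sum_range_succ, ih, Nat.succ_mul, Finset.sum_range_add]

lemma pow_card_pow_sum {ι : Type*} (s : Finset ι) (f : ι → AlgebraicClosure F) (e : ℕ) :
    (∑ i ∈ s, f i) ^ (Fintype.card F) ^ e = ∑ i ∈ s, (f i) ^ (Fintype.card F) ^ e := by
  obtain ⟨p, hp⟩ := CharP.exists F
  haveI := hp
  have hprime : p.Prime := CharP.char_is_prime F p
  haveI : Fact p.Prime := ⟨hprime⟩
  obtain ⟨s', -, hcard⟩ := FiniteField.card F p
  haveI : CharP (AlgebraicClosure F) p :=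
    charP_of_injective_algebraMap (algebraMap F (AlgebraicClosure F)).injective p
  rw [hcard, ← pow_mul]
  calc (∑ i ∈ s, f i) ^ p ^ ((s' : ℕ) * e)
      = iterateFrobenius (AlgebraicClosure F) p ((s' : ℕ) * e) (∑ i ∈ s, f i) :=
        (iterateFrobenius_def _ _ _).symm
    _ = ∑ i ∈ s, iterateFrobenius (AlgebraicClosure F) p ((s' : ℕ) * e) (f i) := map_sum _ _ _
    _ = ∑ i ∈ s, (f i) ^ p ^ ((s' : ℕ) * e) :=
        Finset.sum_congr rfl fun i _ => iterateFrobenius_def _ _ _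

lemma smul_pow_card_pow (c : F) (x : AlgebraicClosure F) (e : ℕ) :
    (c • x) ^ (Fintype.card F) ^ e = c • x ^ (Fintype.card F) ^ e := by
  rw [Algebra.smul_def, mul_pow, ← map_pow, FiniteField.pow_card_pow, ← Algebra.smul_def]

end Aux

/-- **Corollary 7.** Let `m ∣ n` and let `β ∈ F_{q^n}` be normal over `F_q`. Then every element
of `F_{q^m}` is written uniquely as `L_{((x^n-1)/(x^m-1))·h(x)}(β)` with `h ∈ F_q[x]` either
constant or of degree at most `m - 1` (i.e. of `natDegree < m`). -/
theorem subfield_unique_representation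
    (F : Type*) [Field F] [Fintype F]
    (q : ℕ) (hq : q = Fintype.card F)
    (n : ℕ) (hn : 0 < n) (m : ℕ) (hm : m ∣ n) (hm0 : 0 < m)
    (β : AlgebraicClosure F) (hβmem : β ^ q ^ n = β) (hβ : IsNormalElement F n β) :
    ∀ α : AlgebraicClosure F, α ^ q ^ m = α →
      ∃! h : Polynomial F, h.natDegree < m ∧
        qAssoc F ((((X : Polynomial F) ^ n - 1) / ((X : Polynomial F) ^ m - 1)) * h) β = α := by
  subst hq
  intro α hα
  obtain ⟨t, hmt⟩ := hm
  have ht0 : 0 < t := by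
    rcases Nat.eq_zero_or_pos t with h0 | h0
    · rw [h0, Nat.mul_zero] at hmt; omega
    · exact h0
  have hmn : m ≤ n := by
    calc m = m * 1 := (Nat.mul_one m).symm
    _ ≤ m * t := Nat.mul_le_mul_left m ht0
    _ = n := hmt.symm
  -- the quotient polynomial is the sum of `X^(j*m)`
  have hg : ((X : F[X]) ^ n - 1) / ((X : F[X]) ^ m - 1) = ∑ j ∈ range t, (X : F[X]) ^ (j * m) := by
    have hne : ((X : F[X]) ^ m - 1) ≠ 0 := by
      simpa using X_pow_sub_C_ne_zero hm0 (1 : F)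
    have hmul : ((X : F[X]) ^ m - 1) * (∑ j ∈ range t, (X : F[X]) ^ (j * m))
        = (X : F[X]) ^ n - 1 := by
      rw [mul_comm]
      calc (∑ j ∈ range t, (X : F[X]) ^ (j * m)) * ((X : F[X]) ^ m - 1)
          = (∑ j ∈ range t, ((X : F[X]) ^ m) ^ j) * ((X : F[X]) ^ m - 1) := by
            congr 1
            exact Finset.sum_congr rfl fun j _ => by rw [← pow_mul, mul_comm]
        _ = ((X : F[X]) ^ m) ^ t - 1 := geom_sum_mul _ t
        _ = (X : F[X]) ^ n - 1 := by rw [← pow_mul, ← hmt]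
    rw [← hmul, mul_div_cancel_left₀ _ hne]
  -- the value formula for `qAssoc (g * h) β`
  have hval : ∀ h : F[X], h.natDegree < m →
      qAssoc F ((((X : F[X]) ^ n - 1) / ((X : F[X]) ^ m - 1)) * h) β
        = ∑ k ∈ range n,
            algebraMap F (AlgebraicClosure F) (h.coeff (k % m)) * β ^ (Fintype.card F) ^ k := by
    intro h hh
    rw [hg, Finset.sum_mul, qAssoc_finset_sum]
    have h1 : ∀ j ∈ range t, qAssoc F ((X : F[X]) ^ (j * m) * h) β
        = ∑ i ∈ range m,
            (fun k => algebraMap F (AlgebraicClosure F) (h.coeff (k % m))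
              * β ^ (Fintype.card F) ^ k) (j * m + i) := by
      intro j _
      rw [qAssoc_X_pow_mul (j * m) h hh β]
      refine Finset.sum_congr rfl fun i hi => ?_
      have hmod : (j * m + i) % m = i := by
        simp [Nat.add_mod, Nat.mul_mod_left, Nat.mod_eq_of_lt (mem_range.mp hi)]
      simp only [hmod]
    rw [Finset.sum_congr rfl h1]
    exact (sum_grid (fun k => algebraMap F (AlgebraicClosure F) (h.coeff (k % m))
        * β ^ (Fintype.card F) ^ k) t m).trans
      (by rw [show t * m = n from by rw [hmt, Nat.mul_comm]])
  -- linear independence in a usable form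
  have hLI : ∀ g : Fin n → F,
      (∑ i : Fin n, g i • β ^ (Fintype.card F) ^ (i : ℕ)) = 0 → ∀ i, g i = 0 :=
    Fintype.linearIndependent_iff.mp hβ.1
  -- uniqueness claim
  have huniq : ∀ h₁ h₂ : F[X], h₁.natDegree < m → h₂.natDegree < m →
      qAssoc F ((((X : F[X]) ^ n - 1) / ((X : F[X]) ^ m - 1)) * h₁) β
        = qAssoc F ((((X : F[X]) ^ n - 1) / ((X : F[X]) ^ m - 1)) * h₂) β → h₁ = h₂ := by
    intro h₁ h₂ hd₁ hd₂ heq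
    rw [hval h₁ hd₁, hval h₂ hd₂] at heq
    have hsum : (∑ i : Fin n,
        (h₁.coeff ((i : ℕ) % m) - h₂.coeff ((i : ℕ) % m)) • β ^ (Fintype.card F) ^ (i : ℕ)) = 0 := by
      rw [Fin.sum_univ_eq_sum_range
        (fun k => (h₁.coeff (k % m) - h₂.coeff (k % m)) • β ^ (Fintype.card F) ^ k) n]
      have hterm : ∀ k ∈ range n,
          (h₁.coeff (k % m) - h₂.coeff (k % m)) • β ^ (Fintype.card F) ^ k
            = algebraMap F (AlgebraicClosure F) (h₁.coeff (k % m)) * β ^ (Fintype.card F) ^ k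
              - algebraMap F (AlgebraicClosure F) (h₂.coeff (k % m))
                * β ^ (Fintype.card F) ^ k := by
        intro k _
        rw [Algebra.smul_def, map_sub, sub_mul]
      rw [Finset.sum_congr rfl hterm, Finset.sum_sub_distrib, heq, sub_self]
    have hcoeffeq : ∀ i : Fin n, h₁.coeff ((i : ℕ) % m) = h₂.coeff ((i : ℕ) % m) :=
      fun i => sub_eq_zero.mp (hLI _ hsum i)
    ext i
    rcases lt_or_ge i m with hi | hi
    · have := hcoeffeq ⟨i, lt_of_lt_of_le hi hmn⟩
      rwa [Nat.mod_eq_of_lt hi] at this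
    · rw [coeff_eq_zero_of_natDegree_lt (lt_of_lt_of_le hd₁ hi),
        coeff_eq_zero_of_natDegree_lt (lt_of_lt_of_le hd₂ hi)]
  -- `α` lies in `F_{q^n}`
  have hαn : α ^ (Fintype.card F) ^ n = α := by
    have key : ∀ j : ℕ, α ^ (Fintype.card F) ^ (m * j) = α := by
      intro j
      induction j with
      | zero => simp
      | succ j ih => rw [Nat.mul_succ, pow_add, pow_mul, ih, hα]
    rw [hmt]; exact key t
  have hspan : α ∈ (Submodule.span F
      (Set.range fun i : Fin n => β ^ (Fintype.card F) ^ (i : ℕ)) :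
      Set (AlgebraicClosure F)) := by
    rw [hβ.2]; exact hαn
  obtain ⟨c, hc⟩ := (Submodule.mem_span_range_iff_exists_fun F).mp hspan
  -- periodicity of powers of β
  have hβper : ∀ a : ℕ, β ^ (Fintype.card F) ^ a = β ^ (Fintype.card F) ^ (a % n) := by
    have aux : ∀ b r : ℕ, β ^ (Fintype.card F) ^ (r + n * b) = β ^ (Fintype.card F) ^ r := by
      intro b
      induction b with
      | zero => simp
      | succ b ih =>
        intro r
        have hr : r + n * (b + 1) = (r + n * b) + n := by ring
        rw [hr, pow_add, mul_comm ((Fintype.card F) ^ (r + n * b)) ((Fintype.card F) ^ n),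
          pow_mul, hβmem, ih r]
    intro a
    conv_lhs => rw [← Nat.mod_add_div a n, aux]
  haveI : NeZero n := ⟨hn.ne'⟩
  -- the shifted representation of α
  have hshift : ∑ i : Fin n, c i • β ^ (Fintype.card F) ^ (((i : ℕ) + m) % n) = α := by
    calc ∑ i : Fin n, c i • β ^ (Fintype.card F) ^ (((i : ℕ) + m) % n)
        = ∑ i : Fin n, (c i • β ^ (Fintype.card F) ^ (i : ℕ)) ^ (Fintype.card F) ^ m := by
          refine Finset.sum_congr rfl fun i _ => ?_
          rw [smul_pow_card_pow, ← pow_mul, ← pow_add, hβper ((i : ℕ) + m)]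
      _ = (∑ i : Fin n, c i • β ^ (Fintype.card F) ^ (i : ℕ)) ^ (Fintype.card F) ^ m :=
          (pow_card_pow_sum _ _ m).symm
      _ = α ^ (Fintype.card F) ^ m := by rw [hc]
      _ = α := hα
  -- reindex using the addition-by-m permutation of Fin n
  set σ : Equiv.Perm (Fin n) := Equiv.addRight (open Fin.NatCast in ((m : ℕ) : Fin n)) with hσ
  have hσval : ∀ i : Fin n, ((σ i : Fin n) : ℕ) = ((i : ℕ) + m) % n := by
    intro i
    have h1 : σ i = i + (open Fin.NatCast in ((m : ℕ) : Fin n)) := rfl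
    rw [h1, Fin.val_add, Fin.val_natCast]
    conv_rhs => rw [Nat.add_mod]
    rw [Nat.mod_eq_of_lt i.isLt]
  have hα2 : ∑ j : Fin n, c (σ.symm j) • β ^ (Fintype.card F) ^ (j : ℕ) = α := by
    rw [← Equiv.sum_comp σ (fun j : Fin n => c (σ.symm j) • β ^ (Fintype.card F) ^ (j : ℕ))]
    simp only [Equiv.symm_apply_apply, hσval]
    exact hshift
  have hper : ∀ i : Fin n, c (σ i) = c i := by
    have hz : ∑ j : Fin n, (c (σ.symm j) - c j) • β ^ (Fintype.card F) ^ (j : ℕ) = 0 := by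
      simp only [sub_smul]
      rw [Finset.sum_sub_distrib, hα2, hc, sub_self]
    intro i
    have h2 := sub_eq_zero.mp (hLI _ hz (σ i))
    rw [Equiv.symm_apply_apply] at h2
    exact h2.symm
  -- the coefficient function on ℕ
  set d : ℕ → F := fun k => c ⟨k % n, Nat.mod_lt k hn⟩ with hd
  have hdper : ∀ k : ℕ, d (k + m) = d k := by
    intro k
    have hfin : σ ⟨k % n, Nat.mod_lt k hn⟩ = ⟨(k + m) % n, Nat.mod_lt _ hn⟩ :=
      Fin.ext (by rw [hσval]; exact Nat.mod_add_mod k n m)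
    have h2 := hper ⟨k % n, Nat.mod_lt k hn⟩
    rw [hfin] at h2
    exact h2
  have hdper2 : ∀ (i j : ℕ), d (i + m * j) = d i := by
    intro i j
    induction j with
    | zero => simp
    | succ j ih =>
      have : i + m * (j + 1) = (i + m * j) + m := by ring
      rw [this, hdper, ih]
  have hdmod : ∀ k : ℕ, d k = d (k % m) := by
    intro k
    conv_lhs => rw [← Nat.mod_add_div k m]
    exact hdper2 (k % m) (k / m)
  have hdc : ∀ i : Fin n, d (i : ℕ) = c i := by
    intro i
    show c _ = c i
    exact congrArg c (Fin.ext (Nat.mod_eq_of_lt i.isLt))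
  -- the representing polynomial
  set h : F[X] := ∑ i ∈ range m, monomial i (d i) with hhdef
  have hcoeff : ∀ i : ℕ, h.coeff i = if i < m then d i else 0 := by
    intro i
    rw [hhdef, finset_sum_coeff]
    simp only [coeff_monomial]
    rw [Finset.sum_ite_eq' (range m) i (fun j => d j)]
    simp [Finset.mem_range]
  have hdeg : h.natDegree < m := by
    rcases eq_or_ne h 0 with h0 | h0
    · rw [h0, natDegree_zero]; exact hm0
    · rw [natDegree_lt_iff_degree_lt h0, hhdef]
      refine lt_of_le_of_lt (degree_sum_le _ _) ?_
      rw [Finset.sup_lt_iff (by exact_mod_cast WithBot.bot_lt_coe m)]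
      intro j hj
      exact lt_of_le_of_lt (degree_monomial_le j (d j)) (by exact_mod_cast mem_range.mp hj)
  have hvalh : qAssoc F ((((X : F[X]) ^ n - 1) / ((X : F[X]) ^ m - 1)) * h) β = α := by
    rw [hval h hdeg]
    calc ∑ k ∈ range n,
          algebraMap F (AlgebraicClosure F) (h.coeff (k % m)) * β ^ (Fintype.card F) ^ k
        = ∑ k ∈ range n, d k • β ^ (Fintype.card F) ^ k := by
          refine Finset.sum_congr rfl fun k _ => ?_
          rw [hcoeff, if_pos (Nat.mod_lt k hm0), ← hdmod, Algebra.smul_def]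
      _ = ∑ i : Fin n, c i • β ^ (Fintype.card F) ^ (i : ℕ) := by
          rw [← Fin.sum_univ_eq_sum_range (fun k => d k • β ^ (Fintype.card F) ^ k) n]
          exact Finset.sum_congr rfl fun i _ => by rw [hdc i]
      _ = α := hc
  refine ⟨h, ⟨hdeg, hvalh⟩, ?_⟩
  rintro h' ⟨hd', hv'⟩
  exact huniq h' h hd' hdeg (hv'.trans hvalh.symm)
end

section
/- Let q be a prime power, let f_1, …, f_k ∈ F_q[x] be nonzero polynomials, and let d_1, …, d_k be positive integers. Let ℓ be any positive integer divisible by each of d_1, …, d_k, set G_ℓ(x) = gcd(x^ℓ − 1, f_1(x)(x^ℓ − 1)/(x^{d_1} − 1), …, f_k(x)(x^ℓ − 1)/(x^{d_k} − 1)) and H_ℓ(x) = (x^ℓ − 1)/G_ℓ(x). Then the sumset L_{f_1}(F_{q^{d_1}}) + ⋯ + L_{f_k}(F_{q^{d_k}}) = {L_{f_1}(a_1) + ⋯ + L_{f_k}(a_k) : a_i ∈ F_{q^{d_i}}} equals the set of roots of L_{H_ℓ} in the algebraic closure of F_q, and in particular has exactly q^{deg H_ℓ} elements. -/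
open Polynomial

section aux
variable {F : Type*} [Field F] [Fintype F]

local notation "Ω" => AlgebraicClosure F

lemma qAssoc_def (f : Polynomial F) (x : Ω) :
    qAssoc F f x = f.sum (fun i a => algebraMap F Ω a * x ^ (Fintype.card F) ^ i) := by
  rw [qAssoc, Polynomial.sum]

lemma qAssoc_zero_left (x : Ω) : qAssoc F 0 x = 0 := by simp [qAssoc]

lemma qAssoc_add_left (f g : Polynomial F) (x : Ω) :
    qAssoc F (f + g) x = qAssoc F f x + qAssoc F g x := by
  rw [qAssoc_def, qAssoc_def, qAssoc_def]
  exact Polynomial.sum_add_index f g _ (by simp) (by intros; rw [map_add, add_mul])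

/-- `qAssoc` as additive hom in the polynomial. -/
noncomputable def qAssocL (x : Ω) : Polynomial F →+ Ω where
  toFun f := qAssoc F f x
  map_zero' := qAssoc_zero_left x
  map_add' f g := qAssoc_add_left f g x

lemma qAssoc_sub_left (f g : Polynomial F) (x : Ω) :
    qAssoc F (f - g) x = qAssoc F f x - qAssoc F g x :=
  map_sub (qAssocL x) f g

lemma qAssoc_sum_left {ι : Type*} (s : Finset ι) (f : ι → Polynomial F) (x : Ω) :
    qAssoc F (∑ i ∈ s, f i) x = ∑ i ∈ s, qAssoc F (f i) x :=
  map_sum (qAssocL x) f s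

lemma qAssoc_zero_right (f : Polynomial F) : qAssoc F f 0 = 0 := by
  simp [qAssoc, zero_pow (pow_ne_zero _ Fintype.card_ne_zero)]

lemma qAssoc_monomial (n : ℕ) (a : F) (x : Ω) :
    qAssoc F (monomial n a) x = algebraMap F Ω a * x ^ (Fintype.card F) ^ n := by
  rcases eq_or_ne a 0 with rfl | ha
  · simp [qAssoc]
  · rw [qAssoc, Polynomial.support_monomial n ha, Finset.sum_singleton, coeff_monomial_same]
end aux

section char
variable {F : Type*} [Field F] [Fintype F]
local notation "Ω" => AlgebraicClosure F
variable (p n : ℕ)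

lemma frob_add (hp : p.Prime) [CharP F p] (hn : Fintype.card F = p ^ n) (i : ℕ) (x y : Ω) :
    (x + y) ^ (Fintype.card F) ^ i = x ^ (Fintype.card F) ^ i + y ^ (Fintype.card F) ^ i := by
  haveI : Fact p.Prime := ⟨hp⟩
  haveI : CharP Ω p := charP_of_injective_algebraMap (algebraMap F Ω).injective p
  rw [hn, ← pow_mul]
  exact add_pow_char_pow x y p (n * i)

lemma qAssoc_add_right (hp : p.Prime) [CharP F p] (hn : Fintype.card F = p ^ n)
    (f : Polynomial F) (x y : Ω) :
    qAssoc F f (x + y) = qAssoc F f x + qAssoc F f y := by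
  rw [qAssoc, qAssoc, qAssoc, ← Finset.sum_add_distrib]
  refine Finset.sum_congr rfl fun i _ => ?_
  rw [frob_add p n hp hn, mul_add]

lemma algebraMap_pow_q (m : ℕ) (a : F) :
    (algebraMap F Ω a) ^ (Fintype.card F) ^ m = algebraMap F Ω a := by
  rw [← map_pow, FiniteField.pow_card_pow]

lemma qAssoc_pow_q (hp : p.Prime) [CharP F p] (hn : Fintype.card F = p ^ n)
    (f : Polynomial F) (x : Ω) (m : ℕ) :
    (qAssoc F f x) ^ (Fintype.card F) ^ m = qAssoc F f (x ^ (Fintype.card F) ^ m) := by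
  haveI : Fact p.Prime := ⟨hp⟩
  haveI : CharP Ω p := charP_of_injective_algebraMap (algebraMap F Ω).injective p
  haveI : ExpChar Ω p := ExpChar.prime hp
  have key : ∀ z : Ω, z ^ (Fintype.card F) ^ m = iterateFrobenius Ω p (n * m) z := by
    intro z; rw [iterateFrobenius_def, hn, ← pow_mul]
  rw [key, qAssoc, qAssoc, map_sum]
  refine Finset.sum_congr rfl fun i _ => ?_
  rw [map_mul, map_pow, ← key, ← key, algebraMap_pow_q, ← pow_mul]

lemma qAssoc_mul (hp : p.Prime) [CharP F p] (hn : Fintype.card F = p ^ n)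
    (f g : Polynomial F) (x : Ω) :
    qAssoc F (f * g) x = qAssoc F f (qAssoc F g x) := by
  induction f using Polynomial.induction_on' with
  | add a b ha hb => rw [add_mul, qAssoc_add_left, qAssoc_add_left, ha, hb]
  | monomial m a =>
    rw [qAssoc_monomial]
    induction g using Polynomial.induction_on' with
    | add c e hc he =>
      rw [mul_add, qAssoc_add_left, qAssoc_add_left, frob_add p n hp hn, mul_add, hc, he]
    | monomial m' b =>
      rw [monomial_mul_monomial, qAssoc_monomial, qAssoc_monomial, mul_pow,
        algebraMap_pow_q, map_mul, ← pow_mul, ← pow_add, add_comm m m', mul_assoc]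

lemma qAssoc_X_pow_sub_one (m : ℕ) (x : Ω) :
    qAssoc F ((X : Polynomial F) ^ m - 1) x = x ^ (Fintype.card F) ^ m - x := by
  rw [X_pow_eq_monomial, ← Polynomial.monomial_zero_one, qAssoc_sub_left,
    qAssoc_monomial, qAssoc_monomial, map_one, one_mul, one_mul, pow_zero, pow_one]
end char

section roots
variable {F : Type*} [Field F] [Fintype F]
local notation "Ω" => AlgebraicClosure F

/-- The linearized polynomial over the algebraic closure whose evaluation is `qAssoc`. -/
noncomputable def Lpoly (g : Polynomial F) : Polynomial Ω :=
  ∑ i ∈ g.support, C (algebraMap F Ω (g.coeff i)) * X ^ (Fintype.card F) ^ i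

lemma eval_Lpoly (g : Polynomial F) (x : Ω) : (Lpoly g).eval x = qAssoc F g x := by
  simp [Lpoly, qAssoc, eval_finset_sum]

lemma coeff_Lpoly_top (g : Polynomial F) (hg : g ≠ 0) :
    (Lpoly g).coeff ((Fintype.card F) ^ g.natDegree) = algebraMap F Ω g.leadingCoeff := by
  rw [Lpoly, finset_sum_coeff]
  have hq2 : 2 ≤ Fintype.card F := Fintype.one_lt_card
  have key : ∀ i ∈ g.support,
      (C (algebraMap F Ω (g.coeff i)) * X ^ (Fintype.card F) ^ i).coeff
        ((Fintype.card F) ^ g.natDegree) =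
      if i = g.natDegree then algebraMap F Ω (g.coeff i) else 0 := by
    intro i _
    rw [coeff_C_mul, coeff_X_pow]
    by_cases h : i = g.natDegree
    · simp [h]
    · have : (Fintype.card F) ^ g.natDegree ≠ (Fintype.card F) ^ i :=
        fun hc => h (Nat.pow_right_injective hq2 hc.symm)
      rw [if_neg this, mul_zero, if_neg h]
  rw [Finset.sum_congr rfl key, Finset.sum_ite_eq' g.support g.natDegree
    (fun i => algebraMap F Ω (g.coeff i)),
    if_pos (natDegree_mem_support_of_nonzero hg)]
  rfl

lemma natDegree_Lpoly (g : Polynomial F) (hg : g ≠ 0) :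
    (Lpoly g).natDegree = (Fintype.card F) ^ g.natDegree := by
  have hq1 : 1 ≤ Fintype.card F := Fintype.card_pos
  refine le_antisymm ?_ (le_natDegree_of_ne_zero ?_)
  · refine natDegree_sum_le_of_forall_le _ _ fun i hi => ?_
    exact (natDegree_C_mul_X_pow_le _ _).trans
      (Nat.pow_le_pow_right hq1 (le_natDegree_of_mem_supp i hi))
  · rw [coeff_Lpoly_top g hg]
    simpa using (leadingCoeff_ne_zero.mpr hg)

lemma Lpoly_ne_zero (g : Polynomial F) (hg : g ≠ 0) : Lpoly g ≠ 0 := fun h => by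
  have := coeff_Lpoly_top g hg
  rw [h, coeff_zero] at this
  exact leadingCoeff_ne_zero.mpr hg (by simpa using this.symm)
end roots

section count
variable {F : Type*} [Field F] [Fintype F]
local notation "Ω" => AlgebraicClosure F

lemma X_pow_sub_one_ne_zero {ℓ : ℕ} (hℓ : 0 < ℓ) : ((X : Polynomial F) ^ ℓ - 1) ≠ 0 := by
  intro h
  have h2 : ((X : Polynomial F) ^ ℓ - C 1).natDegree = ℓ := natDegree_X_pow_sub_C
  rw [map_one, h] at h2
  simp only [natDegree_zero] at h2
  omega

lemma ker_finset (g : Polynomial F) (ℓ : ℕ) (hℓ : 0 < ℓ)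
    (hdvd : g ∣ (X : Polynomial F) ^ ℓ - 1) :
    ∃ s : Finset Ω, {x : Ω | qAssoc F g x = 0} = ↑s ∧
      s.card = (Fintype.card F) ^ g.natDegree := by
  classical
  have hg0 : g ≠ 0 := by
    rintro rfl
    exact X_pow_sub_one_ne_zero hℓ (zero_dvd_iff.mp hdvd)
  obtain ⟨u, hu⟩ := hdvd
  have hc0 : g.coeff 0 ≠ 0 := by
    have h1 : ((X : Polynomial F) ^ ℓ - 1).coeff 0 = -1 := by
      simp [coeff_X_pow, hℓ.ne, hℓ.ne']
    rw [hu, Polynomial.mul_coeff_zero] at h1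
    intro h; rw [h, zero_mul] at h1
    exact (by norm_num : (0 : F) ≠ -1) h1
  -- characteristic facts
  set p := ringChar F with hpdef
  haveI : CharP F p := ringChar.charP F
  have hp : p.Prime := CharP.char_is_prime F p
  obtain ⟨n, -, hcard⟩ := FiniteField.card F p
  haveI : CharP Ω p := charP_of_injective_algebraMap (algebraMap F Ω).injective p
  -- derivative computation
  have hderiv : derivative (Lpoly g : Polynomial Ω) = C (algebraMap F Ω (g.coeff 0)) := by
    have h0mem : (0 : ℕ) ∈ g.support := mem_support_iff.mpr hc0
    rw [Lpoly, map_sum, ← Finset.add_sum_erase _ _ h0mem]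
    have hzero : ∀ i ∈ g.support.erase 0,
        derivative (C (algebraMap F Ω (g.coeff i)) * X ^ (Fintype.card F) ^ i) = 0 := by
      intro i hi
      have hi0 : i ≠ 0 := Finset.ne_of_mem_erase hi
      rw [derivative_C_mul_X_pow]
      have hcast : ((Fintype.card F ^ i : ℕ) : Ω) = 0 := by
        rw [hcard]
        refine (CharP.cast_eq_zero_iff Ω p _).mpr ?_
        exact dvd_pow (dvd_pow_self p (PNat.pos n).ne') (by positivity)
      rw [hcast, mul_zero, map_zero, zero_mul]
    rw [Finset.sum_eq_zero hzero, add_zero, pow_zero]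
    rw [derivative_C_mul_X_pow]
    norm_num
  have hsep : (Lpoly g : Polynomial Ω).Separable := by
    rw [Polynomial.Separable, hderiv]
    have hne : algebraMap F Ω (g.coeff 0) ≠ 0 := by
      simpa using hc0
    exact ⟨0, C (algebraMap F Ω (g.coeff 0))⁻¹, by
      rw [zero_mul, zero_add, ← C_mul, inv_mul_cancel₀ hne, C_1]⟩
  have hsplits : Splits (Lpoly g) := IsAlgClosed.splits _
  have hcardroots : Multiset.card (Lpoly g).roots = (Fintype.card F) ^ g.natDegree := by
    rw [← natDegree_Lpoly g hg0]
    exact splits_iff_card_roots.mp hsplits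
  refine ⟨(Lpoly g).roots.toFinset, ?_, ?_⟩
  · ext x
    simp only [Set.mem_setOf_eq, Finset.coe_sort_coe, Finset.mem_coe,
      Multiset.mem_toFinset, mem_roots (Lpoly_ne_zero g hg0), IsRoot, eval_Lpoly]
  · rw [Multiset.toFinset_card_of_nodup (nodup_roots hsep), hcardroots]

lemma exists_gcd_rep [DecidableEq F] {ι : Type*} [DecidableEq ι] (s : Finset ι)
    (g : ι → Polynomial F) :
    ∃ c : ι → Polynomial F, s.gcd g = ∑ i ∈ s, c i * g i := by
  induction s using Finset.induction_on with
  | empty => exact ⟨fun _ => 0, by simp⟩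
  | @insert a s ha ih =>
    obtain ⟨c, hc⟩ := ih
    obtain ⟨u, v, huv⟩ := exists_gcd_eq_mul_add_mul (g a) (s.gcd g)
    refine ⟨fun i => if i = a then u else v * c i, ?_⟩
    have hs : ∑ i ∈ s, (if i = a then u else v * c i) * g i = v * ∑ i ∈ s, c i * g i := by
      rw [Finset.mul_sum]
      refine Finset.sum_congr rfl fun i hi => ?_
      rw [if_neg (fun h => ha (by rw [← h]; exact hi)), mul_assoc]
    rw [Finset.gcd_insert, huv, Finset.sum_insert ha]
    beta_reduce
    rw [if_pos rfl, hs, hc]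
    ring
end count

/-- For nonzero `f₁, …, f_k ∈ F_q[x]`, positive integers `d₁, …, d_k` and `ℓ` divisible by each
`dᵢ`, with `G_ℓ = gcd(x^ℓ - 1, f₁(x)(x^ℓ-1)/(x^{d₁}-1), …)` and `H_ℓ = (x^ℓ-1)/G_ℓ`, the sumset
`L_{f₁}(F_{q^{d₁}}) + ⋯ + L_{f_k}(F_{q^{d_k}})` equals the set of roots of `L_{H_ℓ}` in the
algebraic closure of `F_q`, and in particular has exactly `q^{deg H_ℓ}` elements. -/
theorem sumset_eq_roots
    (F : Type*) [Field F] [Fintype F] [DecidableEq F]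
    (q : ℕ) (hq : q = Fintype.card F)
    {k : ℕ} (f : Fin k → Polynomial F) (hf : ∀ i, f i ≠ 0)
    (d : Fin k → ℕ) (hd : ∀ i, 0 < d i)
    (ℓ : ℕ) (hℓ : 0 < ℓ) (hdvd : ∀ i, d i ∣ ℓ)
    (G H : Polynomial F)
    (hG : G = gcd ((X : Polynomial F) ^ ℓ - 1)
      (Finset.univ.gcd fun i => f i * ((X : Polynomial F) ^ ℓ - 1) / ((X : Polynomial F) ^ (d i) - 1)))
    (hH : H = ((X : Polynomial F) ^ ℓ - 1) / G) :
    {x : AlgebraicClosure F | ∃ a : Fin k → AlgebraicClosure F,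
        (∀ i, a i ^ q ^ (d i) = a i) ∧ x = ∑ i, qAssoc F (f i) (a i)} =
      {x : AlgebraicClosure F | qAssoc F H x = 0} ∧
    Nat.card {x : AlgebraicClosure F // ∃ a : Fin k → AlgebraicClosure F,
        (∀ i, a i ^ q ^ (d i) = a i) ∧ x = ∑ i, qAssoc F (f i) (a i)} = q ^ H.natDegree := by
  subst hq
  classical
  set Ω := AlgebraicClosure F with hΩ
  set q := Fintype.card F with hqdef
  -- characteristic setup
  set p := ringChar F with hpdef
  haveI : CharP F p := ringChar.charP F
  have hp : p.Prime := CharP.char_is_prime F p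
  obtain ⟨n, -, hcard⟩ := FiniteField.card F p
  have hmul : ∀ (a b : Polynomial F) (x : Ω),
      qAssoc F (a * b) x = qAssoc F a (qAssoc F b x) :=
    fun a b x => qAssoc_mul p n hp hcard a b x
  -- basic polynomials
  set A : Polynomial F := (X : Polynomial F) ^ ℓ - 1 with hAdef
  have hA0 : A ≠ 0 := X_pow_sub_one_ne_zero hℓ
  have hdvd_m : ∀ i, ((X : Polynomial F) ^ (d i) - 1) ∣ A := by
    intro i
    obtain ⟨c, hc⟩ := hdvd i
    have h2 := sub_dvd_pow_sub_pow ((X : Polynomial F) ^ (d i)) 1 c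
    rwa [← pow_mul, one_pow, ← hc] at h2
  have hdi0 : ∀ i, ((X : Polynomial F) ^ (d i) - 1) ≠ 0 :=
    fun i => X_pow_sub_one_ne_zero (hd i)
  set m : Fin k → Polynomial F := fun i => A / ((X : Polynomial F) ^ (d i) - 1) with hmdef
  have hm : ∀ i, ((X : Polynomial F) ^ (d i) - 1) * m i = A :=
    fun i => EuclideanDomain.mul_div_cancel' (hdi0 i) (hdvd_m i)
  set g : Fin k → Polynomial F :=
    fun i => f i * ((X : Polynomial F) ^ ℓ - 1) / ((X : Polynomial F) ^ (d i) - 1) with hgdef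
  have hg : ∀ i, g i = f i * m i := by
    intro i
    have h1 : ((X : Polynomial F) ^ (d i) - 1) * (f i * m i) = f i * A := by
      rw [← hm i]; ring
    have h2 : ((X : Polynomial F) ^ (d i) - 1) * (g i) = f i * A :=
      EuclideanDomain.mul_div_cancel' (hdi0 i) ((hdvd_m i).mul_left (f i))
    exact mul_left_cancel₀ (hdi0 i) (h2.trans h1.symm)
  -- G and H facts
  have hGA : G ∣ A := hG ▸ gcd_dvd_left _ _
  have hG0 : G ≠ 0 := fun h => hA0 (by rwa [h, zero_dvd_iff] at hGA)
  have hGH : G * H = A := hH ▸ EuclideanDomain.mul_div_cancel' hG0 hGA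
  have hH0 : H ≠ 0 := fun h => hA0 (by rw [← hGH, h, mul_zero])
  have hHA : H ∣ A := ⟨G, by rw [← hGH]; ring⟩
  have hGg : ∀ i, G ∣ g i := fun i => by
    rw [hG]
    exact dvd_trans (gcd_dvd_right _ _) (Finset.gcd_dvd (Finset.mem_univ i))
  have hHf : ∀ i, ∃ u : Polynomial F, H * f i = ((X : Polynomial F) ^ (d i) - 1) * u := by
    intro i
    obtain ⟨u, hu⟩ := hGg i
    refine ⟨u, mul_left_cancel₀ hG0 ?_⟩
    calc G * (H * f i) = f i * A := by rw [← mul_assoc, hGH]; ring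
      _ = f i * (((X : Polynomial F) ^ (d i) - 1) * m i) := by rw [hm]
      _ = ((X : Polynomial F) ^ (d i) - 1) * (f i * m i) := by ring
      _ = ((X : Polynomial F) ^ (d i) - 1) * (G * u) := by rw [← hg i, hu]
      _ = G * (((X : Polynomial F) ^ (d i) - 1) * u) := by ring
  -- the sets
  set S : Set Ω := {x : Ω | ∃ a : Fin k → Ω,
      (∀ i, a i ^ q ^ (d i) = a i) ∧ x = ∑ i, qAssoc F (f i) (a i)} with hSdef
  set KH : Set Ω := {x : Ω | qAssoc F H x = 0} with hKHdef
  -- additive homs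
  let ψH : Ω →+ Ω := AddMonoidHom.mk' (qAssoc F H) (qAssoc_add_right p n hp hcard H)
  let ψG : Ω →+ Ω := AddMonoidHom.mk' (qAssoc F G) (qAssoc_add_right p n hp hcard G)
  let ψA : Ω →+ Ω := AddMonoidHom.mk' (qAssoc F A) (qAssoc_add_right p n hp hcard A)
  -- Step 1 : S ⊆ KH
  have hSsub : S ⊆ KH := by
    rintro x ⟨a, ha, rfl⟩
    show qAssoc F H (∑ i, qAssoc F (f i) (a i)) = 0
    have h1 : qAssoc F H (∑ i, qAssoc F (f i) (a i))
        = ∑ i, qAssoc F H (qAssoc F (f i) (a i)) := map_sum ψH _ _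
    rw [h1]
    refine Finset.sum_eq_zero fun i _ => ?_
    obtain ⟨u, hu⟩ := hHf i
    rw [← hmul, hu, mul_comm, hmul, qAssoc_X_pow_sub_one, ha i, sub_self,
      qAssoc_zero_right]
  -- Bezout representation
  obtain ⟨c, hcrep⟩ := exists_gcd_rep (F := F) Finset.univ g
  obtain ⟨u₀, v₀, h₀⟩ := exists_gcd_eq_mul_add_mul A (Finset.univ.gcd g)
  have hGrep : G = A * u₀ + (∑ i, c i * g i) * v₀ := by
    rw [hG, h₀, ← hcrep]
  -- Step 2 : image of E under ψG is contained in S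
  have himg : ∀ y : Ω, qAssoc F A y = 0 → qAssoc F G y ∈ S := by
    intro y hy
    refine ⟨fun i => qAssoc F (v₀ * c i * m i) y, fun i => ?_, ?_⟩
    · have h2 : qAssoc F (((X : Polynomial F) ^ (d i) - 1) * (v₀ * c i * m i)) y = 0 := by
        have h1 : ((X : Polynomial F) ^ (d i) - 1) * (v₀ * c i * m i)
            = (v₀ * c i) * A := by rw [← hm i]; ring
        rw [h1, hmul, hy, qAssoc_zero_right]
      rw [hmul, qAssoc_X_pow_sub_one] at h2
      exact sub_eq_zero.mp h2
    · have hterm : ∀ i, qAssoc F (f i) (qAssoc F (v₀ * c i * m i) y)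
          = qAssoc F ((v₀ * c i) * g i) y := by
        intro i
        rw [← hmul]
        congr 1
        rw [hg i]; ring
      have hpoly : G = u₀ * A + ∑ i, (v₀ * c i) * g i := by
        rw [hGrep, Finset.sum_mul, mul_comm A u₀]
        exact congrArg (u₀ * A + ·) (Finset.sum_congr rfl fun i _ => by ring)
      have hsum : qAssoc F G y = qAssoc F (u₀ * A) y + qAssoc F (∑ i, (v₀ * c i) * g i) y := by
        rw [← qAssoc_add_left, ← hpoly]
      rw [hsum, hmul, hy, qAssoc_zero_right, zero_add, qAssoc_sum_left]
      exact Finset.sum_congr rfl fun i _ => (hterm i).symm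
  -- counting
  obtain ⟨sG, hsG, hsGcard⟩ := ker_finset G ℓ hℓ hGA
  obtain ⟨sH, hsH, hsHcard⟩ := ker_finset H ℓ hℓ hHA
  obtain ⟨sE, hsE, hsEcard⟩ := ker_finset A ℓ hℓ dvd_rfl
  have hAdeg : A.natDegree = ℓ := by
    rw [hAdef, ← map_one (C : F →+* Polynomial F)]
    exact natDegree_X_pow_sub_C
  have hdegsum : G.natDegree + H.natDegree = ℓ := by
    rw [← hAdeg, ← hGH, natDegree_mul hG0 hH0]
  -- kernel of ψA as subgroup
  let E' : AddSubgroup Ω := ψA.ker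
  have hEset : (E' : Set Ω) = ↑sE := by
    rw [← hsE]
    ext x
    simp only [SetLike.mem_coe, AddMonoidHom.mem_ker, Set.mem_setOf_eq]
    rfl
  have hKGsubE : ∀ x : Ω, qAssoc F G x = 0 → qAssoc F A x = 0 := by
    intro x hx
    rw [← hGH, mul_comm, hmul, hx, qAssoc_zero_right]
  haveI : Finite E' := by
    have : Finite (↑sE : Set Ω) := sE.finite_toSet
    rw [← hEset] at this
    exact this
  let θ : E' →+ Ω := ψG.comp E'.subtype
  have lag : Nat.card E' = Nat.card (E' ⧸ θ.ker) * Nat.card θ.ker :=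
    AddSubgroup.card_eq_card_quotient_mul_card_addSubgroup θ.ker
  have iso : Nat.card (E' ⧸ θ.ker) = Nat.card θ.range :=
    Nat.card_congr (QuotientAddGroup.quotientKerEquivRange θ).toEquiv
  have hcardE : Nat.card E' = sE.card := by
    have h1 : Nat.card (E' : Set Ω) = sE.card := by
      rw [hEset, Nat.card_coe_set_eq, Set.ncard_coe_finset]
    exact h1
  have hmemG : ∀ x : Ω, qAssoc F G x = 0 ↔ x ∈ sG :=
    fun x => (Set.ext_iff.mp hsG x).trans Finset.mem_coe
  have hcardker : Nat.card θ.ker = sG.card := by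
    have e : θ.ker ≃ (↑sG : Set Ω) := by
      refine ⟨fun z => ⟨z.1.1, Finset.mem_coe.mpr ((hmemG _).mp (AddMonoidHom.mem_ker.mp z.2))⟩,
        fun w => ⟨⟨w.1, ?_⟩, ?_⟩, fun z => ?_, fun w => ?_⟩
      · exact AddMonoidHom.mem_ker.mpr
          (hKGsubE w.1 ((hmemG _).mpr (Finset.mem_coe.mp w.2)))
      · exact AddMonoidHom.mem_ker.mpr ((hmemG _).mpr (Finset.mem_coe.mp w.2))
      · ext; rfl
      · ext; rfl
    rw [Nat.card_congr e, Nat.card_coe_set_eq, Set.ncard_coe_finset]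
  have hrange : (θ.range : Set Ω) = qAssoc F G '' (↑sE : Set Ω) := by
    ext x
    constructor
    · rintro ⟨⟨y, hy⟩, rfl⟩
      refine ⟨y, ?_, rfl⟩
      have : y ∈ (E' : Set Ω) := hy
      rwa [hEset] at this
    · rintro ⟨y, hy, rfl⟩
      have hy' : y ∈ E' := by rw [← SetLike.mem_coe, hEset]; exact hy
      exact ⟨⟨y, hy'⟩, rfl⟩
  have hcardrange : Nat.card θ.range = Nat.card (qAssoc F G '' (↑sE : Set Ω)) :=
    Nat.card_congr (Equiv.setCongr hrange)
  -- put the count together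
  have hq2 : 2 ≤ q := Fintype.one_lt_card
  have hcount : Nat.card (qAssoc F G '' (↑sE : Set Ω)) = sH.card := by
    have h1 : sE.card = Nat.card (qAssoc F G '' (↑sE : Set Ω)) * sG.card := by
      rw [← hcardE, lag, iso, hcardrange, hcardker]
    rw [hsEcard, hAdeg, hsGcard, ← hdegsum, pow_add] at h1
    have h2 : Nat.card (qAssoc F G '' (↑sE : Set Ω)) * q ^ G.natDegree
        = q ^ H.natDegree * q ^ G.natDegree := by rw [← h1]; ring
    have h3 := Nat.eq_of_mul_eq_mul_right (pow_pos (by omega : 0 < q) G.natDegree) h2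
    rw [h3, hsHcard]
  -- final assembly
  have hmemE : ∀ x : Ω, qAssoc F A x = 0 ↔ x ∈ sE :=
    fun x => (Set.ext_iff.mp hsE x).trans Finset.mem_coe
  have hImgS : qAssoc F G '' (↑sE : Set Ω) ⊆ S := by
    rintro x ⟨y, hy, rfl⟩
    exact himg y ((hmemE y).mpr (Finset.mem_coe.mp hy))
  have hKHsH : KH = ↑sH := hKHdef.trans hsH
  have hSsub' : S ⊆ ↑sH := hKHsH ▸ hSsub
  have hImgH : qAssoc F G '' (↑sE : Set Ω) = ↑sH := by
    refine Set.eq_of_subset_of_ncard_le (hImgS.trans hSsub') ?_ sH.finite_toSet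
    rw [Set.ncard_coe_finset, ← Nat.card_coe_set_eq, hcount]
  have hSeq : S = KH := by
    refine subset_antisymm hSsub ?_
    rw [hKHsH, ← hImgH]
    exact hImgS
  refine ⟨hSeq, ?_⟩
  have hcardS : Nat.card S = q ^ H.natDegree := by
    calc Nat.card S = S.ncard := Nat.card_coe_set_eq S
      _ = (↑sH : Set Ω).ncard := by rw [hSeq, hKHsH]
      _ = sH.card := Set.ncard_coe_finset sH
      _ = q ^ H.natDegree := hsHcard
  exact hcardS
end
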